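/- Let n ≥ 1, m ∈ ℕ ∪ {0}, 0 ≤ α < n, 0 < δ < 1 with mδ < n − α, and set α̃ = mδ + α. Let 1 ≤ r ≤ ∞ and δ̃ ≤ δ. Suppose w is a weight such that 0 < essinf_B w < ∞ for every ball B ⊂ ℝⁿ. If w belongs to the class H(r, α̃, δ̃), then δ̃ = α̃ − n/r (with the convention n/∞ = 0). -/

import Mathlib

open MeasureTheory Metric ENNReal NNReal

noncomputable section

/-- Euclidean space `ℝⁿ`. -/
abbrev E (n : ℕ) := EuclideanSpace ℝ (Fin n)

/-- `(∫ f^p dμ)^(1/p)` for finite `p`, and the essential supremum for `p = ∞`. -/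
noncomputable def eN {n : ℕ} (p : ℝ≥0∞) (f : E n → ℝ≥0∞) (μ : Measure (E n)) : ℝ≥0∞ :=
  if p = ∞ then essSup f μ else (∫⁻ y, f y ^ p.toReal ∂μ) ^ (1 / p.toReal)

/-- The two-weight class `H(r, αt, δt)` with constant `C`, where `r'` denotes the
conjugate exponent of `r` (so the `r = 1`, `r' = ∞` case is the essential supremum,
built into `eN`). -/
def Hclass (n : ℕ) (r' : ℝ≥0∞) (αt δ δt : ℝ) (v w : E n → ℝ≥0∞) (C : ℝ≥0∞) : Prop :=
  ∀ (c : E n) (R : ℝ), 0 < R →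
    essSup (fun y => (w y)⁻¹) (volume.restrict (ball c R)) *
        volume (ball c R) ^ ((δ - δt) / (n : ℝ)) *
        eN r' (fun y =>
          v y * (volume (ball c R) ^ ((1 : ℝ) / (n : ℝ)) +
            ENNReal.ofReal (dist c y)) ^ (-((n : ℝ) - αt + δ))) volume ≤ C

/-- The local condition (L) with constant `C`. -/
def LocalCond (n : ℕ) (r r' : ℝ≥0∞) (αt δt : ℝ) (v w : E n → ℝ≥0∞) (C : ℝ≥0∞) : Prop :=
  ∀ (c : E n) (R : ℝ), 0 < R →
    essSup (fun y => (w y)⁻¹) (volume.restrict (ball c R)) *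
        volume (ball c R) ^ ((αt - δt) / (n : ℝ) - r⁻¹.toReal) *
        eN r' v ((volume (ball c R))⁻¹ • volume.restrict (ball c R)) ≤ C

/-- The global condition (G) with constant `C`. -/
def GlobalCond (n : ℕ) (r' : ℝ≥0∞) (αt δ δt : ℝ) (v w : E n → ℝ≥0∞) (C : ℝ≥0∞) : Prop :=
  ∀ (c : E n) (R : ℝ), 0 < R →
    essSup (fun y => (w y)⁻¹) (volume.restrict (ball c R)) *
        volume (ball c R) ^ ((δ - δt) / (n : ℝ)) *
        eN r' (fun y => v y * (ENNReal.ofReal (dist c y)) ^ (-((n : ℝ) - αt + δ)))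
          (volume.restrict ((ball c R)ᶜ)) ≤ C

/-- `b ∈ Λ(δ)` with Lipschitz-`δ` constant `Cb`. -/
def LipDelta {n : ℕ} (δ Cb : ℝ) (b : E n → ℝ) : Prop :=
  ∀ x y : E n, |b x - b y| ≤ Cb * dist x y ^ δ

/-- The size condition `S*_α` with constant `A`. -/
def SizeCond (n : ℕ) (α A : ℝ) (K : E n → ℝ) : Prop :=
  ∀ x : E n, x ≠ 0 → |K x| ≤ A * ‖x‖ ^ (α - (n : ℝ))

/-- The smoothness condition `H*_{α,∞}` with exponent `γ` and constant `A`. -/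
def SmoothCond (n : ℕ) (α γ A : ℝ) (K : E n → ℝ) : Prop :=
  ∀ x x' y : E n, 2 * dist x x' ≤ dist x y →
    |K (x - y) - K (x' - y)| + |K (y - x) - K (y - x')| ≤
      A * dist x x' ^ γ / dist x y ^ ((n : ℝ) - α + γ)

/-- If `R ↦ R ^ t` is bounded on `(0, ∞)`, then `t = 0`. -/
lemma aux_rpow_bounded_eq_zero {t M : ℝ} (h : ∀ R : ℝ, 0 < R → R ^ t ≤ M) : t = 0 := by
  by_contra ht
  have hM1 : (1 : ℝ) ≤ M := by simpa using h 1 one_pos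
  have hM0 : (0 : ℝ) < M + 1 := by linarith
  have hR : (0 : ℝ) < (M + 1) ^ (1 / t) := Real.rpow_pos_of_pos hM0 _
  have h2 := h _ hR
  rw [← Real.rpow_mul hM0.le, one_div_mul_cancel ht, Real.rpow_one] at h2
  linarith

/-- if a single weight `w`, with `0 < essinf_B w < ∞` on every ball,
belongs to `H(r, α̃, δ̃)`, then `δ̃ = α̃ − n/r`. -/
theorem statement0 (n m : ℕ) (α δ δt αt : ℝ) (r r' : ℝ≥0∞)
    (hn : 1 ≤ n) (hα0 : 0 ≤ α) (hαn : α < (n : ℝ)) (hδ0 : 0 < δ) (hδ1 : δ < 1)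
    (hmδ : (m : ℝ) * δ < (n : ℝ) - α) (hαt : αt = (m : ℝ) * δ + α)
    (hr : 1 ≤ r) (hconj : r⁻¹ + r'⁻¹ = 1) (hδt : δt ≤ δ)
    (w : E n → ℝ≥0∞) (hwm : Measurable w)
    (hinf : ∀ (c : E n) (R : ℝ), 0 < R →
      0 < essInf w (volume.restrict (ball c R)) ∧
        essInf w (volume.restrict (ball c R)) < ∞)
    (C : ℝ≥0) (hH : Hclass n r' αt δ δt w w (C : ℝ≥0∞)) :
    δt = αt - (n : ℝ) * r⁻¹.toReal := by
  have hnpos : (0 : ℝ) < (n : ℝ) := by exact_mod_cast Nat.lt_of_lt_of_le Nat.zero_lt_one hn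
  have hn0 : ((n : ℝ)) ≠ 0 := hnpos.ne'
  have hr0 : r ≠ 0 := (zero_lt_one.trans_le hr).ne'
  have hrinv_ne_top : r⁻¹ ≠ ∞ := by simp [hr0]
  have hr'inv_le : r'⁻¹ ≤ 1 := hconj ▸ le_add_self
  have hr'1 : 1 ≤ r' := ENNReal.inv_le_one.mp hr'inv_le
  have hr'0 : r' ≠ 0 := (zero_lt_one.trans_le hr'1).ne'
  have hr'inv_ne_top : r'⁻¹ ≠ ∞ := ne_top_of_le_ne_top ENNReal.one_ne_top hr'inv_le
  set q : ℝ := (r'⁻¹).toReal with hqdef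
  have hq0 : (0 : ℝ) ≤ q := ENNReal.toReal_nonneg
  have hq1 : (r⁻¹).toReal = 1 - q := by
    have h := congrArg ENNReal.toReal hconj
    rw [ENNReal.toReal_add hrinv_ne_top hr'inv_ne_top, ENNReal.toReal_one] at h
    linarith
  set s : ℝ := (n : ℝ) - αt + δ with hsdef
  have hs0 : 0 < s := by rw [hsdef, hαt]; linarith
  set t : ℝ := αt - δt - (n : ℝ) * (r⁻¹).toReal with htdef
  -- constants
  set V₁ : ℝ≥0∞ := volume (ball (0 : E n) 1) with hV₁def
  have hV₁0 : V₁ ≠ 0 := (measure_ball_pos _ _ one_pos).ne'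
  have hV₁top : V₁ ≠ ∞ := measure_ball_lt_top.ne
  set K : ℝ≥0∞ := V₁ ^ ((1 : ℝ) / (n : ℝ)) + 1 with hKdef
  have hK0 : K ≠ 0 := by simp [hKdef]
  have hKtop : K ≠ ∞ :=
    ENNReal.add_ne_top.mpr ⟨ENNReal.rpow_ne_top_of_nonneg (by positivity) hV₁top,
      ENNReal.one_ne_top⟩
  have hV₁pos : 0 < V₁ := pos_iff_ne_zero.mpr hV₁0
  have hKpos : 0 < K := pos_iff_ne_zero.mpr hK0
  set c₀ : ℝ≥0∞ := V₁ ^ ((δ - δt) / (n : ℝ)) * (K ^ (-s) * V₁ ^ q) with hc₀def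
  have hc₀0 : c₀ ≠ 0 := by
    refine mul_ne_zero (ENNReal.rpow_pos hV₁pos hV₁top).ne'
      (mul_ne_zero (ENNReal.rpow_pos hKpos hKtop).ne' (ENNReal.rpow_pos hV₁pos hV₁top).ne')
  have hc₀top : c₀ ≠ ∞ := by
    refine ENNReal.mul_ne_top ?_ (ENNReal.mul_ne_top ?_ ?_)
    · exact ENNReal.rpow_ne_top_of_nonneg (div_nonneg (by linarith) hnpos.le) hV₁top
    · rw [ENNReal.rpow_neg]
      exact ENNReal.inv_ne_top.mpr (ENNReal.rpow_pos hKpos hKtop).ne'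
    · exact ENNReal.rpow_ne_top_of_nonneg hq0 hV₁top
  -- main estimate
  have key : ∀ R : ℝ, 0 < R → c₀ * ENNReal.ofReal R ^ t ≤ (C : ℝ≥0∞) := by
    intro R hR
    set ρ : ℝ≥0∞ := ENNReal.ofReal R with hρdef
    have hρ0 : ρ ≠ 0 := (ENNReal.ofReal_pos.mpr hR).ne'
    have hρtop : ρ ≠ ∞ := ENNReal.ofReal_ne_top
    set B : Set (E n) := ball (0 : E n) R with hBdef
    set V : ℝ≥0∞ := volume B with hVdef
    have hVform : V = ρ ^ (n : ℝ) * V₁ := by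
      rw [hVdef, hBdef, hV₁def, Measure.addHaar_ball_of_pos volume (0 : E n) hR,
        finrank_euclideanSpace_fin, ENNReal.ofReal_pow hR.le, hρdef, ENNReal.rpow_natCast]
    have hV0 : V ≠ 0 := by
      rw [hVform]
      exact mul_ne_zero (ENNReal.rpow_pos (pos_iff_ne_zero.mpr hρ0) hρtop).ne' hV₁0
    have hrestr0 : volume.restrict B ≠ 0 := by
      rw [Ne, Measure.restrict_eq_zero]
      exact hV0
    set I : ℝ≥0∞ := essInf w (volume.restrict B) with hIdef
    obtain ⟨hI0, hItop⟩ := hinf 0 R hR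
    -- lower bound for the essSup of the inverse
    have hA : I⁻¹ ≤ essSup (fun y => (w y)⁻¹) (volume.restrict B) := by
      set S := essSup (fun y => (w y)⁻¹) (volume.restrict B) with hSdef
      have h1 : ∀ᵐ y ∂(volume.restrict B), (w y)⁻¹ ≤ S := ENNReal.ae_le_essSup _
      have h2 : ∀ᵐ y ∂(volume.restrict B), S⁻¹ ≤ w y := by
        filter_upwards [h1] with y hy
        simpa using ENNReal.inv_le_inv' hy
      have h3 : S⁻¹ ≤ I := le_essInf_of_ae_le _ h2
      calc I⁻¹ ≤ (S⁻¹)⁻¹ := ENNReal.inv_le_inv' h3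
        _ = S := inv_inv S
    -- the volume factor
    have hB : V ^ ((δ - δt) / (n : ℝ)) = ρ ^ (δ - δt) * V₁ ^ ((δ - δt) / (n : ℝ)) := by
      rw [hVform, ENNReal.mul_rpow_of_nonneg _ _ (div_nonneg (by linarith) hnpos.le),
        ← ENNReal.rpow_mul]
      congr 2
      field_simp
    -- pointwise lower bound on the kernel factor
    have hbase : ∀ y ∈ B, (ρ * K) ^ (-s) ≤
        (V ^ ((1 : ℝ) / (n : ℝ)) + ENNReal.ofReal (dist (0 : E n) y)) ^ (-s) := by
      intro y hy
      have hV1n : V ^ ((1 : ℝ) / (n : ℝ)) = ρ * V₁ ^ ((1 : ℝ) / (n : ℝ)) := by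
        rw [hVform, ENNReal.mul_rpow_of_nonneg _ _ (by positivity), ← ENNReal.rpow_mul]
        congr 2
        field_simp
        simp
      have hdy : ENNReal.ofReal (dist (0 : E n) y) ≤ ρ := by
        apply ENNReal.ofReal_le_ofReal
        rw [dist_comm]
        exact (mem_ball.mp hy).le
      have hle : V ^ ((1 : ℝ) / (n : ℝ)) + ENNReal.ofReal (dist (0 : E n) y) ≤ ρ * K := by
        rw [hV1n, hKdef, mul_add, mul_one, mul_comm ρ (V₁ ^ ((1 : ℝ) / (n : ℝ)))]
        exact add_le_add le_rfl hdy
      rw [ENNReal.rpow_neg, ENNReal.rpow_neg]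
      exact ENNReal.inv_le_inv' (ENNReal.rpow_le_rpow hle hs0.le)
    -- a.e. lower bound on the integrand
    have hae : ∀ᵐ y ∂(volume.restrict B),
        I * (ρ * K) ^ (-s) ≤
          w y * (V ^ ((1 : ℝ) / (n : ℝ)) + ENNReal.ofReal (dist (0 : E n) y)) ^ (-s) := by
      have hw : ∀ᵐ y ∂(volume.restrict B), I ≤ w y := ae_essInf_le
      have hmem : ∀ᵐ y ∂(volume.restrict B), y ∈ B := ae_restrict_mem measurableSet_ball
      filter_upwards [hw, hmem] with y h1 h2
      exact mul_le_mul' h1 (hbase y h2)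
    -- lower bound for the eN factor
    have hD : I * (ρ * K) ^ (-s) * V ^ q ≤
        eN r' (fun y =>
          w y * (V ^ ((1 : ℝ) / (n : ℝ)) + ENNReal.ofReal (dist (0 : E n) y)) ^ (-s))
          volume := by
      rcases eq_or_ne r' ∞ with hr'top | hr'top
      · subst hr'top
        have hq' : q = 0 := by simp [hqdef]
        rw [eN, if_pos rfl, hq', ENNReal.rpow_zero, mul_one]
        calc I * (ρ * K) ^ (-s)
            = essSup (fun _ : E n => I * (ρ * K) ^ (-s)) (volume.restrict B) :=
              (essSup_const _ hrestr0).symm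
          _ ≤ essSup (fun y =>
                w y * (V ^ ((1 : ℝ) / (n : ℝ)) + ENNReal.ofReal (dist (0 : E n) y)) ^ (-s))
                (volume.restrict B) := essSup_mono_ae hae
          _ ≤ _ := essSup_mono_measure' Measure.restrict_le_self
      · set p : ℝ := r'.toReal with hpdef
        have hp0 : 0 < p := ENNReal.toReal_pos hr'0 hr'top
        have hqp : q = 1 / p := by rw [hqdef, ENNReal.toReal_inv, one_div, hpdef]
        rw [eN, if_neg hr'top]
        have step1 : (I * (ρ * K) ^ (-s)) ^ p * V ≤
            ∫⁻ y, (w y * (V ^ ((1 : ℝ) / (n : ℝ)) +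
              ENNReal.ofReal (dist (0 : E n) y)) ^ (-s)) ^ p ∂(volume.restrict B) := by
          calc (I * (ρ * K) ^ (-s)) ^ p * V
              = ∫⁻ _, (I * (ρ * K) ^ (-s)) ^ p ∂(volume.restrict B) := by
                rw [lintegral_const, Measure.restrict_apply_univ]
            _ ≤ _ := lintegral_mono_ae (hae.mono fun y hy => ENNReal.rpow_le_rpow hy hp0.le)
        have step2 : ∫⁻ y, (w y * (V ^ ((1 : ℝ) / (n : ℝ)) +
              ENNReal.ofReal (dist (0 : E n) y)) ^ (-s)) ^ p ∂(volume.restrict B) ≤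
            ∫⁻ y, (w y * (V ^ ((1 : ℝ) / (n : ℝ)) +
              ENNReal.ofReal (dist (0 : E n) y)) ^ (-s)) ^ p ∂volume :=
          lintegral_mono' Measure.restrict_le_self le_rfl
        calc I * (ρ * K) ^ (-s) * V ^ q
            = ((I * (ρ * K) ^ (-s)) ^ p * V) ^ (1 / p) := by
              rw [ENNReal.mul_rpow_of_nonneg _ _ (by positivity : (0 : ℝ) ≤ 1 / p),
                ← ENNReal.rpow_mul, mul_one_div, div_self hp0.ne', ENNReal.rpow_one, hqp]
          _ ≤ _ := ENNReal.rpow_le_rpow (step1.trans step2) (by positivity)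
    -- combine with the hypothesis
    have main : I⁻¹ * (ρ ^ (δ - δt) * V₁ ^ ((δ - δt) / (n : ℝ))) *
        (I * (ρ * K) ^ (-s) * V ^ q) ≤ (C : ℝ≥0∞) := by
      refine le_trans ?_ (hH 0 R hR)
      exact mul_le_mul' (mul_le_mul' hA (le_of_eq hB.symm)) hD
    have heq : I⁻¹ * (ρ ^ (δ - δt) * V₁ ^ ((δ - δt) / (n : ℝ))) *
        (I * (ρ * K) ^ (-s) * V ^ q) = (I⁻¹ * I) * (c₀ * ρ ^ t) := by
      rw [hVform, ENNReal.mul_rpow_of_ne_zero hρ0 hK0,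
        ENNReal.mul_rpow_of_nonneg _ _ hq0, ← ENNReal.rpow_mul, hc₀def]
      rw [show ρ ^ t = ρ ^ (δ - δt) * ρ ^ (-s) * ρ ^ ((n : ℝ) * q) by
        rw [← ENNReal.rpow_add _ _ hρ0 hρtop, ← ENNReal.rpow_add _ _ hρ0 hρtop]
        congr 1
        rw [htdef, hsdef, hq1]
        ring]
      ring
    calc c₀ * ρ ^ t = (I⁻¹ * I) * (c₀ * ρ ^ t) := by
          rw [ENNReal.inv_mul_cancel hI0.ne' hItop.ne, one_mul]
      _ = _ := heq.symm
      _ ≤ (C : ℝ≥0∞) := main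
  -- conclude that the exponent vanishes
  have hfin : (C : ℝ≥0∞) / c₀ ≠ ⊤ := (ENNReal.div_lt_top ENNReal.coe_ne_top hc₀0).ne
  have hM : ∀ R : ℝ, 0 < R → R ^ t ≤ ((C : ℝ≥0∞) / c₀).toReal := by
    intro R hR
    have h2 : ENNReal.ofReal R ^ t ≤ (C : ℝ≥0∞) / c₀ := by
      rw [ENNReal.le_div_iff_mul_le (Or.inl hc₀0) (Or.inl hc₀top), mul_comm]
      exact key R hR
    rw [ENNReal.ofReal_rpow_of_pos hR] at h2
    have h3 := ENNReal.toReal_mono hfin h2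
    rwa [ENNReal.toReal_ofReal (Real.rpow_nonneg hR.le t)] at h3
  have ht : t = 0 := aux_rpow_bounded_eq_zero hM
  rw [htdef] at ht
  linarith
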